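/- Let ω ∈ C with ω^2 = λ^2 + iλσ where λ ∈ R \ {0}, σ ∈ (0,1], and ω ∈ C₊ (nonnegative imaginary part). Then the real part of ω satisfies |Re ω| ≥ (√2/2)|λ|, hence |ω + λ| ≥ √(3/2)·|λ|, and consequently |ω − λ|^2 = |iσλ/(ω+λ)|^2 ≤ (2/3)σ^2. -/

import Mathlib

/-- For `ω ∈ ℂ₊` with `ω² = λ² + iλσ`, `λ ∈ ℝ \ {0}`, `σ ∈ (0,1]`, one has
`|Re ω| ≥ (√2/2)|λ|`, hence `|ω + λ| ≥ √(3/2)|λ|` and `|ω − λ|² ≤ (2/3)σ²`. -/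
theorem omega_lambda_estimates
    (ω : ℂ) (lam σ : ℝ) (hlam : lam ≠ 0) (hσ0 : 0 < σ) (hσ1 : σ ≤ 1)
    (him : 0 ≤ ω.im)
    (hsq : ω ^ 2 = (lam ^ 2 : ℂ) + Complex.I * lam * σ) :
    |ω.re| ≥ (Real.sqrt 2 / 2) * |lam| ∧
    ‖ω + lam‖ ≥ Real.sqrt (3 / 2) * |lam| ∧
    (‖ω - lam‖) ^ 2 ≤ (2 / 3) * σ ^ 2 := by
  set a := ω.re with ha
  set b := ω.im with hb
  have hl2 : (0:ℝ) < lam ^ 2 := by positivity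
  have h1 : a ^ 2 - b ^ 2 = lam ^ 2 := by
    have := congrArg Complex.re hsq
    simpa [pow_two, Complex.mul_re, Complex.mul_im] using this
  have h2 : 2 * (a * b) = lam * σ := by
    have := congrArg Complex.im hsq
    simp [pow_two, Complex.mul_re, Complex.mul_im] at this
    linarith
  have hb0 : 0 < b := by
    rcases him.lt_or_eq with h | h
    · exact h
    · exfalso
      have : lam * σ = 0 := by rw [← h2, ← h]; ring
      rcases mul_eq_zero.1 this with h' | h'
      · exact hlam h'
      · exact hσ0.ne' h'
  have ha2 : a ^ 2 = lam ^ 2 + b ^ 2 := by linarith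
  have h3 : a * lam * (2 * b) = lam ^ 2 * σ := by linear_combination lam * h2
  have halam : 0 < a * lam := by nlinarith [mul_pos hl2 hσ0]
  have halam2 : lam ^ 2 ≤ a * lam := by nlinarith [mul_pos hl2 hl2, sq_nonneg b]
  have goal1 : |lam| ≤ |a| := by
    nlinarith [sq_abs a, sq_abs lam, abs_nonneg a, abs_nonneg lam, sq_nonneg b]
  refine ⟨?_, ?_, ?_⟩
  · have hsqrt2 : Real.sqrt 2 ≤ 2 := by
      nlinarith [Real.sq_sqrt (show (0:ℝ) ≤ 2 by norm_num), Real.sqrt_nonneg 2]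
    nlinarith [abs_nonneg lam]
  · have habsp : ‖ω + lam‖ ^ 2 = (a + lam) ^ 2 + b ^ 2 := by
      rw [Complex.sq_norm, Complex.normSq_apply]
      simp [← ha, ← hb]
      ring
    have key : (3/2) * lam ^ 2 ≤ (a + lam) ^ 2 + b ^ 2 := by nlinarith [sq_nonneg b]
    have hs : (Real.sqrt (3/2) * |lam|) ^ 2 = (3/2) * lam ^ 2 := by
      rw [mul_pow, Real.sq_sqrt (by norm_num : (0:ℝ) ≤ 3/2), sq_abs]
    nlinarith [norm_nonneg (ω + lam), mul_nonneg (Real.sqrt_nonneg (3/2)) (abs_nonneg lam), habsp, hs, key]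
  · have hprod : (ω - lam) * (ω + lam) = Complex.I * lam * σ := by linear_combination hsq
    have habs3 : ‖ω - lam‖ * ‖ω + lam‖ = |lam| * σ := by
      rw [← norm_mul, hprod]
      simp [Complex.norm_real, abs_of_pos hσ0]
    have habsp : ‖ω + lam‖ ^ 2 = (a + lam) ^ 2 + b ^ 2 := by
      rw [Complex.sq_norm, Complex.normSq_apply]
      simp [← ha, ← hb]
      ring
    have hY2 : (3/2) * lam ^ 2 ≤ ‖ω + lam‖ ^ 2 := by
      rw [habsp]; nlinarith [sq_nonneg b]
    have hXY2 : ‖ω - lam‖ ^ 2 * ‖ω + lam‖ ^ 2 = lam ^ 2 * σ ^ 2 := by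
      have := congrArg (· ^ 2) habs3
      simp only [mul_pow] at this
      rw [this, sq_abs]
    nlinarith [hXY2, hY2, sq_nonneg (‖ω - lam‖), hl2, mul_pos hσ0 hσ0]
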